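/- For every w = (w_1,…,w_n) ∈ K and every 1 ≤ j ≤ n, the vector G_j w equals w with its j-th block replaced by λ w_j; in particular the subspace K is invariant under each G_j. -/
import Mathlib


open Matrix

namespace KLM

variable {k : Type*} [Field k]

/-- Assemble an `Nn × Nn` matrix from an `n × n` array of `N × N` blocks,
blocks being indexed by natural numbers (only indices `< n` are relevant). -/
def blk (n N : ℕ) (B : ℕ → ℕ → Matrix (Fin N) (Fin N) k) :
    Matrix (Fin n × Fin N) (Fin n × Fin N) k :=
  Matrix.of fun p q => B p.1.1 q.1.1 p.2 q.2

/-- The Dettweiler–Reiter convolution matrix `G_j = ρ^{DR}_λ(x_j)` (0-based index `j`):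
the identity except that the `j`-th block row is
`(λ(g_0−1), …, λ(g_{j−1}−1), λ g_j, g_{j+1}−1, …, g_{n−1}−1)`. -/
def G (n N : ℕ) (g : ℕ → Matrix (Fin N) (Fin N) k) (lam : k) (j : ℕ) :
    Matrix (Fin n × Fin N) (Fin n × Fin N) k :=
  blk n N fun r c =>
    if r = j then
      (if c < j then lam • (g c - 1) else if c = j then lam • g j else g c - 1)
    else if r = c then 1 else 0

/-- The Long–Moody matrix `S_i = ρ^{LM}(σ_i)` (0-based index `i`):
`(s_i ⊕ ⋯ ⊕ s_i) · diag(1, …, 1, R_i, 1, …, 1)` where `R_i` is the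
`2×2` block matrix with rows `(0, g_i)` and `(1, 1 − g_{i+1})`
placed in block rows/columns `i, i+1`. -/
def S (n N : ℕ) (g s : ℕ → Matrix (Fin N) (Fin N) k) (i : ℕ) :
    Matrix (Fin n × Fin N) (Fin n × Fin N) k :=
  blk n N fun r c =>
    if r = i ∧ c = i then 0
    else if r = i ∧ c = i + 1 then s i * g i
    else if r = i + 1 ∧ c = i then s i
    else if r = i + 1 ∧ c = i + 1 then s i * (1 - g (i + 1))
    else if r = c then s i
    else 0

/-- `K = {(w_1,…,w_n) : g_j w_j = w_j for all j}` (blockwise fixed vectors). -/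
def Kset (n N : ℕ) (g : ℕ → Matrix (Fin N) (Fin N) k) : Set ((Fin n × Fin N) → k) :=
  {w | ∀ j : Fin n, (g (j : ℕ)).mulVec (fun a => w (j, a)) = fun a => w (j, a)}

/-- The ordered product `G_1 G_2 ⋯ G_n`. -/
def Gprod (n N : ℕ) (g : ℕ → Matrix (Fin N) (Fin N) k) (lam : k) :
    Matrix (Fin n × Fin N) (Fin n × Fin N) k :=
  ((List.finRange n).map fun j => G n N g lam (j : ℕ)).prod

/-- `L = ker (G_1 G_2 ⋯ G_n − 1)`. -/
def Lset (n N : ℕ) (g : ℕ → Matrix (Fin N) (Fin N) k) (lam : k) :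
    Set ((Fin n × Fin N) → k) :=
  {x | (Gprod n N g lam - 1).mulVec x = 0}

/-- For `w ∈ K`, the vector `G_j w` is `w` with its `j`-th block replaced by
`λ w_j`; in particular `K` is invariant under each `G_j`. -/
theorem K_invariant_under_G
    (N n : ℕ) (hN : 1 ≤ N) (hn : 2 ≤ n)
    (g s : ℕ → Matrix (Fin N) (Fin N) k) (lam : k) (hlam : lam ≠ 0)
    (hgu : ∀ j, j < n → IsUnit (g j))
    (hsu : ∀ i, i + 1 < n → IsUnit (s i))
    (hbr1 : ∀ i, i + 2 < n → s i * s (i + 1) * s i = s (i + 1) * s i * s (i + 1))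
    (hbr2 : ∀ i j, i + 1 < n → j + 1 < n → (i + 2 ≤ j ∨ j + 2 ≤ i) →
      s i * s j = s j * s i)
    (ha1 : ∀ i, i + 1 < n → s i * g i = g (i + 1) * s i)
    (ha2 : ∀ i, i + 1 < n → g (i + 1) * s i * g (i + 1) = g i * g (i + 1) * s i)
    (ha3 : ∀ i j, i + 1 < n → j < n → j ≠ i → j ≠ i + 1 → s i * g j = g j * s i) :
    ∀ w ∈ Kset n N g, ∀ j : Fin n,
      ((G n N g lam (j : ℕ)).mulVec w =
        fun p => if p.1 = j then lam * w (j, p.2) else w p) ∧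
      (G n N g lam (j : ℕ)).mulVec w ∈ Kset n N g := by

  intro w hw j
  have hzero : ∀ c : Fin n, ∀ b : Fin N,
      ∑ a : Fin N, (g (c : ℕ) - 1) b a * w (c, a) = 0 := by
    intro c b
    have h : ((g (c : ℕ) - 1).mulVec fun a => w (c, a)) b = 0 := by
      rw [sub_mulVec, one_mulVec, hw c]
      simp
    simpa [mulVec, dotProduct] using h
  have hg : ∀ c : Fin n, ∀ b : Fin N,
      ∑ a : Fin N, g (c : ℕ) b a * w (c, a) = w (c, b) := by
    intro c b
    have h := congrFun (hw c) b
    simpa [mulVec, dotProduct] using h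
  have key : (G n N g lam (j : ℕ)).mulVec w =
      fun p => if p.1 = j then lam * w (j, p.2) else w p := by
    funext p
    obtain ⟨r, b⟩ := p
    show ∑ q : Fin n × Fin N, G n N g lam (j : ℕ) (r, b) q * w q = _
    rw [Fintype.sum_prod_type]
    by_cases hr : r = j
    · subst hr
      simp only [G, blk, of_apply, eq_self_iff_true, if_true]
      have hsum : ∀ c : Fin n,
          (∑ a : Fin N, (if (c : ℕ) < (r : ℕ) then lam • (g (c : ℕ) - 1)
            else if (c : ℕ) = (r : ℕ) then lam • g (r : ℕ) else g (c : ℕ) - 1) b a * w (c, a))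
          = if c = r then lam * w (r, b) else 0 := by
        intro c
        by_cases h1 : (c : ℕ) < (r : ℕ)
        · have hc : c ≠ r := fun h => absurd (congrArg Fin.val h) (Nat.ne_of_lt h1)
          rw [if_neg hc]
          simp only [if_pos h1, Matrix.smul_apply, smul_eq_mul, mul_assoc]
          rw [← Finset.mul_sum, hzero c b, mul_zero]
        · by_cases h2 : (c : ℕ) = (r : ℕ)
          · have hc : c = r := Fin.ext h2
            rw [if_pos hc]
            subst hc
            simp only [if_neg h1, eq_self_iff_true, if_true, Matrix.smul_apply, smul_eq_mul,
              mul_assoc]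
            rw [← Finset.mul_sum, hg c b]
          · have hc : c ≠ r := fun h => h2 (congrArg Fin.val h)
            rw [if_neg hc]
            simp only [if_neg h1, if_neg h2]
            exact hzero c b
      rw [Finset.sum_congr rfl fun c _ => hsum c]
      simp
    · have hrj : (r : ℕ) ≠ (j : ℕ) := fun h => hr (Fin.ext h)
      simp only [G, blk, of_apply, if_neg hrj]
      have hsum : ∀ c : Fin n,
          (∑ a : Fin N, (if (r : ℕ) = (c : ℕ) then (1 : Matrix (Fin N) (Fin N) k) else 0) b a
            * w (c, a)) = if c = r then w (r, b) else 0 := by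
        intro c
        by_cases h1 : (r : ℕ) = (c : ℕ)
        · have hc : c = r := Fin.ext h1.symm
          rw [if_pos hc]
          subst hc
          simp [Matrix.one_apply]
        · have hc : c ≠ r := fun h => h1 ((congrArg Fin.val h).symm)
          rw [if_neg hc]
          simp [if_neg h1]
      rw [Finset.sum_congr rfl fun c _ => hsum c]
      simp [hr]
  refine ⟨key, ?_⟩
  rw [key]
  intro c
  funext b
  show ∑ a : Fin N, g (c : ℕ) b a *
      (if ((c, a) : Fin n × Fin N).1 = j then lam * w (j, a) else w (c, a)) =
    (if ((c, b) : Fin n × Fin N).1 = j then lam * w (j, b) else w (c, b))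
  by_cases hc : c = j
  · subst hc
    simp only [eq_self_iff_true, if_true]
    rw [Finset.sum_congr rfl (fun a _ => by rw [← mul_assoc, mul_comm (g (c : ℕ) b a) lam,
      mul_assoc]), ← Finset.mul_sum, hg c b]
  · simp only [if_neg hc]
    exact hg c b


end KLM
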